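/- Let r₁, r₂, r₃ ∈ ℝ³ and e₁, e₂, e₃ ∈ ℝ³ with e_i ≠ r_i, such that all six points lie in a common 2-plane and r₁, r₂, r₃ are affinely independent. If the three lines r_i e_i are concurrent in a point c with c ∉ affineSpan{r_i, r_j} for all i ≠ j, then there exist nonzero reals w₁₂, w₂₃, w₃₁ (cycle tensions) and u₁, u₂, u₃ (framing tensions) with equilibrium at each r_i: u_i(r_i - e_i) + w(r_i - r_{i-1}) + w'(r_i - r_{i+1}) = 0 with the appropriate cycle tensions w, w'. -/
import Mathlib

/-- Base case of the join/intersection criterion: a planar framed triangle in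
`ℝ³` whose framing lines are concurrent (in a generic point) admits an
everywhere non-zero self-stress. -/
theorem stmt_12 (r₁ r₂ r₃ e₁ e₂ e₃ : Fin 3 → ℝ)
    (hne₁ : e₁ ≠ r₁) (hne₂ : e₂ ≠ r₂) (hne₃ : e₃ ≠ r₃)
    (hind : AffineIndependent ℝ ![r₁, r₂, r₃])
    (hplanar₁ : e₁ ∈ affineSpan ℝ ({r₁, r₂, r₃} : Set (Fin 3 → ℝ)))
    (hplanar₂ : e₂ ∈ affineSpan ℝ ({r₁, r₂, r₃} : Set (Fin 3 → ℝ)))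
    (hplanar₃ : e₃ ∈ affineSpan ℝ ({r₁, r₂, r₃} : Set (Fin 3 → ℝ)))
    (c : Fin 3 → ℝ)
    (hc₁ : ∃ s : ℝ, c = r₁ + s • (e₁ - r₁))
    (hc₂ : ∃ s : ℝ, c = r₂ + s • (e₂ - r₂))
    (hc₃ : ∃ s : ℝ, c = r₃ + s • (e₃ - r₃))
    (hc₁₂ : c ∉ affineSpan ℝ ({r₁, r₂} : Set (Fin 3 → ℝ)))
    (hc₂₃ : c ∉ affineSpan ℝ ({r₂, r₃} : Set (Fin 3 → ℝ)))
    (hc₃₁ : c ∉ affineSpan ℝ ({r₃, r₁} : Set (Fin 3 → ℝ))) :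
    ∃ w₁₂ w₂₃ w₃₁ u₁ u₂ u₃ : ℝ,
      w₁₂ ≠ 0 ∧ w₂₃ ≠ 0 ∧ w₃₁ ≠ 0 ∧ u₁ ≠ 0 ∧ u₂ ≠ 0 ∧ u₃ ≠ 0 ∧
      u₁ • (r₁ - e₁) + w₃₁ • (r₁ - r₃) + w₁₂ • (r₁ - r₂) = 0 ∧
      u₂ • (r₂ - e₂) + w₁₂ • (r₂ - r₁) + w₂₃ • (r₂ - r₃) = 0 ∧
      u₃ • (r₃ - e₃) + w₂₃ • (r₃ - r₂) + w₃₁ • (r₃ - r₁) = 0 := by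
  obtain ⟨s₁, h1⟩ := hc₁
  obtain ⟨s₂, h2⟩ := hc₂
  obtain ⟨s₃, h3⟩ := hc₃
  -- `c` lies in the plane of the triangle
  have hrange : ({r₁, r₂, r₃} : Set (Fin 3 → ℝ)) = Set.range ![r₁, r₂, r₃] := by
    ext x
    simp [Fin.exists_fin_two, Fin.exists_fin_succ, eq_comm, or_assoc]
    tauto
  have hr₁ : r₁ ∈ affineSpan ℝ ({r₁, r₂, r₃} : Set (Fin 3 → ℝ)) :=
    subset_affineSpan ℝ _ (by simp)
  have hcmem : c ∈ affineSpan ℝ ({r₁, r₂, r₃} : Set (Fin 3 → ℝ)) := by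
    rw [h1]
    have := AffineSubspace.smul_vsub_vadd_mem (affineSpan ℝ ({r₁, r₂, r₃} : Set (Fin 3 → ℝ)))
      s₁ hplanar₁ hr₁ hr₁
    simpa [vsub_eq_sub, vadd_eq_add, add_comm] using this
  rw [hrange] at hcmem
  obtain ⟨w, hwsum, hcw⟩ := eq_affineCombination_of_mem_affineSpan_of_fintype hcmem
  rw [Finset.affineCombination_eq_linear_combination _ _ _ hwsum] at hcw
  rw [Fin.sum_univ_three] at hcw
  simp only [Matrix.cons_val_zero, Matrix.cons_val_one, Matrix.head_cons,
    Matrix.cons_val_two, Matrix.tail_cons] at hcw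
  rw [Fin.sum_univ_three] at hwsum
  set a := w 0 with ha
  set b := w 1 with hb
  set d := w 2 with hd
  -- genericity: none of the barycentric coordinates vanishes
  have hd0 : d ≠ 0 := by
    intro h0
    apply hc₁₂
    have : c = AffineMap.lineMap r₁ r₂ b := by
      rw [AffineMap.lineMap_apply]
      simp only [vsub_eq_sub, vadd_eq_add]
      rw [hcw, h0]
      have haa : a = 1 - b := by linarith
      rw [haa]; module
    rw [this]
    exact AffineMap.lineMap_mem_affineSpan_pair _ _ _
  have ha0 : a ≠ 0 := by
    intro h0
    apply hc₂₃
    have : c = AffineMap.lineMap r₂ r₃ d := by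
      rw [AffineMap.lineMap_apply]
      simp only [vsub_eq_sub, vadd_eq_add]
      rw [hcw, h0]
      have hbb : b = 1 - d := by linarith
      rw [hbb]; module
    rw [this]
    exact AffineMap.lineMap_mem_affineSpan_pair _ _ _
  have hb0 : b ≠ 0 := by
    intro h0
    apply hc₃₁
    have : c = AffineMap.lineMap r₃ r₁ a := by
      rw [AffineMap.lineMap_apply]
      simp only [vsub_eq_sub, vadd_eq_add]
      rw [hcw, h0]
      have hdd : d = 1 - a := by linarith
      rw [hdd]; module
    rw [this]
    exact AffineMap.lineMap_mem_affineSpan_pair _ _ _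
  -- the line parameters are non-zero
  have hs₁ : s₁ ≠ 0 := by
    intro h0
    apply hc₁₂
    rw [h0] at h1
    simp only [zero_smul, add_zero] at h1
    rw [h1]
    exact left_mem_affineSpan_pair ℝ r₁ r₂
  have hs₂ : s₂ ≠ 0 := by
    intro h0
    apply hc₂₃
    rw [h0] at h2
    simp only [zero_smul, add_zero] at h2
    rw [h2]
    exact left_mem_affineSpan_pair ℝ r₂ r₃
  have hs₃ : s₃ ≠ 0 := by
    intro h0
    apply hc₃₁
    rw [h0] at h3
    simp only [zero_smul, add_zero] at h3
    rw [h3]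
    exact left_mem_affineSpan_pair ℝ r₃ r₁
  refine ⟨-(a * b), -(b * d), -(d * a), s₁ * a, s₂ * b, s₃ * d,
    by simp [ha0, hb0], by simp [hb0, hd0], by simp [hd0, ha0],
    mul_ne_zero hs₁ ha0, mul_ne_zero hs₂ hb0, mul_ne_zero hs₃ hd0, ?_, ?_, ?_⟩
  · have hA : s₁ • (e₁ - r₁) = (a - 1) • r₁ + b • r₂ + d • r₃ := by
      have := hcw.symm.trans h1
      linear_combination (norm := module) -this
    have hone : (a + b + d) • r₁ = r₁ := by rw [hwsum, one_smul]
    linear_combination (norm := module) (-a) • hA + (-a) • hone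
  · have hA : s₂ • (e₂ - r₂) = a • r₁ + (b - 1) • r₂ + d • r₃ := by
      have := hcw.symm.trans h2
      linear_combination (norm := module) -this
    have hone : (a + b + d) • r₂ = r₂ := by rw [hwsum, one_smul]
    linear_combination (norm := module) (-b) • hA + (-b) • hone
  · have hA : s₃ • (e₃ - r₃) = a • r₁ + b • r₂ + (d - 1) • r₃ := by
      have := hcw.symm.trans h3
      linear_combination (norm := module) -this
    have hone : (a + b + d) • r₃ = r₃ := by rw [hwsum, one_smul]
    linear_combination (norm := module) (-d) • hA + (-d) • hone
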